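/- Let α ∈ (0,1], let Δ ≥ 0 and a ≥ 1 be constants, and let ν₂(n) = #{0 ≤ k ≤ n : Xₖ = 2} denote the number of visits of the Wang–Landau process to state 2 up to time n included. Then, almost surely on the event {T⁰₁→₂ > a}, for every n such that ν₂(n) ≤ Δ one has: if α ∈ (0,1), θ̃ₙ(2) ≤ exp( (γ⋆/(1−α))·⌊a⌋^{1−α}·( ((⌈a+Δ⌉+1)/⌊a⌋)^{1−α} − 1 ) ); and if α = 1, θ̃ₙ(2) ≤ ((⌈a+Δ⌉+1)/⌊a⌋)^{γ⋆}. -/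

import Mathlib

open MeasureTheory ProbabilityTheory Filter Real Set Topology

noncomputable section

/-- The state space: index `0` is state "1", index `1` is state "2", index `2` is state "3". -/
abbrev WLState := Fin 3

/-- First passage time of the trajectory `ω` to the state `s`
(with the convention `sInf ∅ = 0`). -/
def hitTime (s : WLState) (ω : ℕ → WLState) : ℕ := sInf {n : ℕ | ω n = s}

/-- A measure `μ` on trajectory space is the law of the (possibly path-dependent) Markov chain
with initial state `x0` and transition matrix `P x k` at time `k` given the past path `x`,
expressed through its cylinder probabilities. -/
def IsChainLaw (P : (ℕ → WLState) → ℕ → WLState → WLState → ℝ) (x0 : WLState)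
    (μ : Measure (ℕ → WLState)) : Prop :=
  ∀ (n : ℕ) (x : ℕ → WLState),
    μ {ω : ℕ → WLState | ∀ k ≤ n, ω k = x k} =
      (if x 0 = x0 then (1 : ENNReal) else 0) *
        ∏ k ∈ Finset.range n, ENNReal.ofReal (P x k (x k) (x (k + 1)))

/-- The unnormalized Wang-Landau weight `θ̃ₙ(i)` along the path `x`, with step sizes
`γₖ = γs k^(-α)`: it satisfies `θ̃₀ = (1,1,1)` and `θ̃ₙ₊₁(i) = θ̃ₙ(i)(1 + γₙ₊₁ 1_{xₙ₊₁ = i})`. -/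
def wtilde (γs α : ℝ) (x : ℕ → WLState) (n : ℕ) (i : WLState) : ℝ :=
  ∏ k ∈ Finset.Icc 1 n, (1 + if x k = i then γs * (k : ℝ) ^ (-α) else 0)

/-- The normalized Wang-Landau weight `θₙ(i)` along the path `x`. -/
def thetaNorm (γs α : ℝ) (x : ℕ → WLState) (n : ℕ) (i : WLState) : ℝ :=
  wtilde γs α x n i / ∑ j, wtilde γs α x n j

/-- The Metropolis transition matrix `P_θ` biased by the weight vector `θ`. -/
def PWL (ε : ℝ) (θ : WLState → ℝ) : WLState → WLState → ℝ :=
  ![![1 - 1 / 3 * min (ε * θ 0 / θ 1) 1, 1 / 3 * min (ε * θ 0 / θ 1) 1, 0],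
    ![1 / 3 * min (θ 1 / (ε * θ 0)) 1,
      1 - 1 / 3 * min (θ 1 / (ε * θ 0)) 1 - 1 / 3 * min (θ 1 / (ε * θ 2)) 1,
      1 / 3 * min (θ 1 / (ε * θ 2)) 1],
    ![0, 1 / 3 * min (ε * θ 2 / θ 1) 1, 1 - 1 / 3 * min (ε * θ 2 / θ 1) 1]]

/-- `μ` is the law of the Wang-Landau process with parameters `ε`, `γs`, `α`,
started at state "1" (index 0). -/
def IsWLLaw (ε γs α : ℝ) (μ : Measure (ℕ → WLState)) : Prop :=
  IsChainLaw (fun x k => PWL ε (thetaNorm γs α x k)) 0 μ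

/-- `ν₂(n)`: the number of visits of the trajectory `ω` to state "2" (index 1)
up to time `n` included. -/
def nu2 (ω : ℕ → WLState) (n : ℕ) : ℕ :=
  ((Finset.range (n + 1)).filter fun k => ω k = 1).card


-- injection/rearrangement lemma
lemma sum_le_shift (f : ℕ → ℝ) (hf0 : ∀ k, 0 ≤ f k) (S : Finset ℕ) (b : ℕ)
    (hS : ∀ k ∈ S, b < k)
    (hmono : ∀ i j : ℕ, b < i → i ≤ j → f j ≤ f i) :
    ∑ k ∈ S, f k ≤ ∑ i ∈ Finset.range S.card, f (b + 1 + i) := by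
  classical
  set σ : ℕ → ℕ := fun k => (S.filter (fun j => j < k)).card with hσ
  have hlt : ∀ k ∈ S, σ k < S.card := by
    intro k hk
    apply Finset.card_lt_card
    refine ⟨Finset.filter_subset _ _, fun hsub => ?_⟩
    have := hsub hk
    simp at this
  have hle : ∀ k ∈ S, b + 1 + σ k ≤ k := by
    intro k hk
    have hsub : S.filter (fun j => j < k) ⊆ Finset.Ico (b + 1) k := by
      intro j hj
      simp only [Finset.mem_filter] at hj
      simp only [Finset.mem_Ico]
      exact ⟨hS j hj.1, hj.2⟩
    have hcard := Finset.card_le_card hsub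
    rw [Nat.card_Ico] at hcard
    have hbk := hS k hk
    show b + 1 + (S.filter (fun j => j < k)).card ≤ k
    omega
  have hinj : ∀ x ∈ S, ∀ y ∈ S, σ x = σ y → x = y := by
    have key : ∀ x ∈ S, ∀ y ∈ S, x < y → σ x < σ y := by
      intro x hx y hy hxy
      apply Finset.card_lt_card
      refine ⟨Finset.monotone_filter_right S (fun j _ hj => lt_trans hj hxy), fun hsub => ?_⟩
      have : x ∈ S.filter (fun j => j < y) := Finset.mem_filter.2 ⟨hx, hxy⟩
      have := hsub this
      simp at this
    intro x hx y hy hxy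
    rcases lt_trichotomy x y with h | h | h
    · exact absurd hxy (ne_of_lt (key x hx y hy h))
    · exact h
    · exact absurd hxy.symm (ne_of_lt (key y hy x hx h))
  calc ∑ k ∈ S, f k ≤ ∑ k ∈ S, f (b + 1 + σ k) := by
        apply Finset.sum_le_sum
        intro k hk
        exact hmono (b + 1 + σ k) k (by omega) (hle k hk)
    _ = ∑ i ∈ S.image σ, f (b + 1 + i) := by rw [Finset.sum_image hinj]
    _ ≤ ∑ i ∈ Finset.range S.card, f (b + 1 + i) := by
        apply Finset.sum_le_sum_of_subset_of_nonneg
        · intro i hi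
          simp only [Finset.mem_image] at hi
          obtain ⟨k, hk, rfl⟩ := hi
          exact Finset.mem_range.2 (hlt k hk)
        · intro i _ _; exact hf0 _

-- per-step inequality, α < 1
lemma step_lt {α : ℝ} (hα : 0 < α) (hα1 : α < 1) {x : ℝ} (hx : 1 ≤ x) :
    x ^ (-α) ≤ (x ^ (1 - α) - (x - 1) ^ (1 - α)) / (1 - α) := by
  have hx0 : 0 < x := lt_of_lt_of_le one_pos hx
  have hs : (-1 : ℝ) ≤ -1 / x := by
    rw [neg_div, neg_le_neg_iff]
    exact (div_le_one hx0).2 hx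
  have hbern := rpow_one_add_le_one_add_mul_self hs (by linarith : (0:ℝ) ≤ 1 - α) (by linarith)
  -- (1 + (-1/x))^(1-α) ≤ 1 + (1-α)*(-1/x)
  have h1 : (1 : ℝ) + -1 / x = (x - 1) / x := by field_simp; ring
  rw [h1] at hbern
  have hx1 : (0:ℝ) ≤ x - 1 := by linarith
  have hdiv : ((x - 1) / x) ^ (1 - α) = (x - 1) ^ (1 - α) / x ^ (1 - α) :=
    Real.div_rpow hx1 hx0.le _
  rw [hdiv] at hbern
  have hxp : (0:ℝ) < x ^ (1 - α) := Real.rpow_pos_of_pos hx0 _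
  have hmul := mul_le_mul_of_nonneg_right hbern hxp.le
  rw [div_mul_cancel₀ _ (ne_of_gt hxp)] at hmul
  -- hmul : (x-1)^(1-α) ≤ (1 + (1-α) * (-1/x)) * x^(1-α)
  have hpow : x ^ (1 - α) = x ^ (-α) * x := by
    have h3 := Real.rpow_add hx0 (-α) 1
    rw [Real.rpow_one] at h3
    rw [show (1 : ℝ) - α = -α + 1 by ring, h3]
  have hxm : x ^ (1 - α) / x = x ^ (-α) := by
    rw [hpow, mul_div_cancel_right₀ _ (ne_of_gt hx0)]
  have h2 : (1 + (1 - α) * (-1 / x)) * x ^ (1 - α)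
      = x ^ (1 - α) - (1 - α) * x ^ (-α) := by
    rw [← hxm]; field_simp; ring
  rw [h2] at hmul
  rw [le_div_iff₀ (by linarith : (0:ℝ) < 1 - α)]
  linarith

-- per-step inequality, α = 1
lemma step_eq {x : ℝ} (hx : 2 ≤ x) :
    x ^ (-1 : ℝ) ≤ Real.log x - Real.log (x - 1) := by
  have hx0 : (0:ℝ) < x := by linarith
  have hx1 : (0:ℝ) < x - 1 := by linarith
  have h := Real.log_le_sub_one_of_pos (show (0:ℝ) < (x-1)/x by positivity)
  rw [Real.log_div (ne_of_gt hx1) (ne_of_gt hx0)] at h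
  have : (x - 1) / x - 1 = -(1 / x) := by field_simp; ring
  rw [this] at h
  rw [Real.rpow_neg_one]
  have : (x:ℝ)⁻¹ = 1 / x := (one_div x).symm
  rw [this]
  linarith

/-- For `α ∈ (0,1]`, `Δ ≥ 0` and `a ≥ 1`: almost surely, on the event
`{T⁰₁→₂ > a}`, for every `n` with `ν₂(n) ≤ Δ`, the unnormalized weight `θ̃ₙ(2)` is bounded by
`exp((γ⋆/(1−α))·⌊a⌋^{1−α}·(((⌈a+Δ⌉+1)/⌊a⌋)^{1−α} − 1))` if `α ∈ (0,1)`, and by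
`((⌈a+Δ⌉+1)/⌊a⌋)^{γ⋆}` if `α = 1`. -/
theorem stmt17 (γs α ε : ℝ) (hγs : 0 < γs) (hα : 0 < α) (hα1 : α ≤ 1)
    (hε : ε ∈ Set.Ioo (0 : ℝ) 1)
    (μ : Measure (ℕ → WLState)) [IsProbabilityMeasure μ]
    (hμ : IsWLLaw ε γs α μ)
    (Δ a : ℝ) (hΔ : 0 ≤ Δ) (ha : 1 ≤ a) :
    ∀ᵐ ω ∂μ, a < (hitTime 1 ω : ℝ) →
      ∀ n : ℕ, (nu2 ω n : ℝ) ≤ Δ →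
        wtilde γs α ω n 1 ≤
          if α < 1 then
            Real.exp (γs / (1 - α) * (⌊a⌋₊ : ℝ) ^ (1 - α) *
              ((((⌈a + Δ⌉₊ : ℝ) + 1) / (⌊a⌋₊ : ℝ)) ^ (1 - α) - 1))
          else (((⌈a + Δ⌉₊ : ℝ) + 1) / (⌊a⌋₊ : ℝ)) ^ γs := by
  classical
  apply Filter.Eventually.of_forall
  intro ω hhit n hnu
  set b := ⌊a⌋₊ with hb
  have hb1 : 1 ≤ b := Nat.le_floor (by exact_mod_cast ha)
  have hbR : (1:ℝ) ≤ (b:ℝ) := by exact_mod_cast hb1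
  have hb0 : (0:ℝ) < (b:ℝ) := by linarith
  have hba : (b:ℝ) ≤ a := Nat.floor_le (by linarith)
  set S := (Finset.Icc 1 n).filter (fun k => ω k = 1) with hSdef
  set m := S.card with hm
  have hmΔ : (m:ℝ) ≤ Δ := by
    have hsub : S ⊆ (Finset.range (n+1)).filter (fun k => ω k = 1) := by
      apply Finset.filter_subset_filter
      intro k hk
      simp only [Finset.mem_Icc] at hk
      exact Finset.mem_range.2 (by omega)
    have hcard : m ≤ nu2 ω n := Finset.card_le_card hsub
    calc (m:ℝ) ≤ (nu2 ω n : ℝ) := by exact_mod_cast hcard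
      _ ≤ Δ := hnu
  have hSb : ∀ k ∈ S, b < k := by
    intro k hk
    simp only [hSdef, Finset.mem_filter] at hk
    have hle : hitTime 1 ω ≤ k := Nat.sInf_le hk.2
    have hak : a < (k:ℝ) := lt_of_lt_of_le hhit (by exact_mod_cast hle)
    exact (Nat.floor_lt (by linarith)).2 hak
  set C : ℝ := (⌈a + Δ⌉₊ : ℝ) + 1 with hC
  have hbmC : (b:ℝ) + (m:ℝ) ≤ C := by
    have hceil := Nat.le_ceil (a + Δ)
    simp only [hC]; linarith
  have hbC : (b:ℝ) ≤ C := by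
    have hm0 : (0:ℝ) ≤ (m:ℝ) := Nat.cast_nonneg m
    linarith
  have hC0 : (0:ℝ) < C := by linarith
  have hf0 : ∀ k : ℕ, (0:ℝ) ≤ ((k:ℝ)) ^ (-α) :=
    fun k => Real.rpow_nonneg (Nat.cast_nonneg k) _
  have hA : wtilde γs α ω n 1 ≤ Real.exp (γs * ∑ k ∈ S, ((k:ℝ)) ^ (-α)) := by
    unfold wtilde
    calc ∏ k ∈ Finset.Icc 1 n, (1 + if ω k = 1 then γs * (k:ℝ)^(-α) else 0)
        ≤ ∏ k ∈ Finset.Icc 1 n, Real.exp (if ω k = 1 then γs * (k:ℝ)^(-α) else 0) := by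
          apply Finset.prod_le_prod
          · intro k _
            have hite : (0:ℝ) ≤ (if ω k = 1 then γs * (k:ℝ)^(-α) else 0) := by
              split_ifs
              · exact mul_nonneg hγs.le (hf0 k)
              · exact le_refl 0
            linarith
          · intro k _
            rw [add_comm]
            exact Real.add_one_le_exp _
      _ = Real.exp (∑ k ∈ Finset.Icc 1 n, if ω k = 1 then γs * (k:ℝ)^(-α) else 0) :=
          (Real.exp_sum _ _).symm
      _ = Real.exp (γs * ∑ k ∈ S, ((k:ℝ)) ^ (-α)) := by
          rw [← Finset.sum_filter, ← Finset.mul_sum]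
  have hmono : ∀ i j : ℕ, b < i → i ≤ j → ((j:ℝ))^(-α) ≤ ((i:ℝ))^(-α) := by
    intro i j hi hij
    have hipos : 0 < i := by omega
    have hi0 : (0:ℝ) < (i:ℝ) := by exact_mod_cast hipos
    rw [Real.rpow_neg (Nat.cast_nonneg j), Real.rpow_neg (Nat.cast_nonneg i)]
    apply inv_anti₀ (Real.rpow_pos_of_pos hi0 α)
    exact Real.rpow_le_rpow hi0.le (by exact_mod_cast hij) hα.le
  have hB : ∑ k ∈ S, ((k:ℝ))^(-α) ≤ ∑ i ∈ Finset.range m, (((b+1+i : ℕ):ℝ))^(-α) :=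
    sum_le_shift _ hf0 S b hSb hmono
  by_cases hc : α < 1
  · rw [if_pos hc]
    set p : ℝ := 1 - α with hp
    have hp0 : (0:ℝ) < p := by simp only [hp]; linarith
    set g : ℕ → ℝ := fun i => (((b+i : ℕ):ℝ)) ^ p / p with hg
    have hstep : ∀ i ∈ Finset.range m, (((b+1+i : ℕ):ℝ))^(-α) ≤ g (i+1) - g i := by
      intro i _
      have hx : (1:ℝ) ≤ ((b+1+i : ℕ):ℝ) := by
        push_cast
        have : (0:ℝ) ≤ (i:ℝ) := Nat.cast_nonneg i
        linarith
      have hs := step_lt hα hc hx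
      have e1 : ((b+1+i : ℕ):ℝ) - 1 = ((b+i : ℕ):ℝ) := by push_cast; ring
      have e2 : ((b+(i+1) : ℕ):ℝ) = ((b+1+i : ℕ):ℝ) := by push_cast; ring
      rw [e1] at hs
      simp only [hg, e2]
      calc (((b+1+i : ℕ):ℝ))^(-α)
          ≤ (((b+1+i : ℕ):ℝ) ^ (1-α) - ((b+i : ℕ):ℝ) ^ (1-α)) / (1-α) := hs
        _ = ((b+1+i : ℕ):ℝ) ^ p / p - ((b+i : ℕ):ℝ) ^ p / p := by
            simp only [hp]; ring
    have htele : ∑ i ∈ Finset.range m, (((b+1+i : ℕ):ℝ))^(-α) ≤ g m - g 0 := by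
      calc ∑ i ∈ Finset.range m, (((b+1+i : ℕ):ℝ))^(-α)
          ≤ ∑ i ∈ Finset.range m, (g (i+1) - g i) := Finset.sum_le_sum hstep
        _ = g m - g 0 := Finset.sum_range_sub g m
    have hg0 : g 0 = (b:ℝ) ^ p / p := by simp [hg]
    have hmono2 : g m ≤ C ^ p / p := by
      simp only [hg]
      have hle' : ((b+m : ℕ):ℝ) ^ p ≤ C ^ p :=
        Real.rpow_le_rpow (Nat.cast_nonneg _) (by push_cast; linarith) hp0.le
      exact (div_le_div_iff_of_pos_right hp0).2 hle'
    have hbp : (0:ℝ) < (b:ℝ) ^ p := Real.rpow_pos_of_pos hb0 p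
    have hexp : γs / p * (b:ℝ) ^ p * ((C / (b:ℝ)) ^ p - 1)
        = γs * (C ^ p / p - (b:ℝ) ^ p / p) := by
      rw [Real.div_rpow hC0.le (Nat.cast_nonneg b)]
      field_simp
    calc wtilde γs α ω n 1 ≤ Real.exp (γs * ∑ k ∈ S, ((k:ℝ)) ^ (-α)) := hA
      _ ≤ Real.exp (γs / p * (b:ℝ) ^ p * ((C / (b:ℝ)) ^ p - 1)) := by
          rw [Real.exp_le_exp, hexp]
          apply mul_le_mul_of_nonneg_left _ hγs.le
          calc ∑ k ∈ S, ((k:ℝ)) ^ (-α)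
              ≤ ∑ i ∈ Finset.range m, (((b+1+i : ℕ):ℝ))^(-α) := hB
            _ ≤ g m - g 0 := htele
            _ ≤ C ^ p / p - (b:ℝ) ^ p / p := by rw [hg0]; linarith
  · rw [if_neg hc]
    have hα' : α = 1 := le_antisymm hα1 (not_lt.mp hc)
    subst hα'
    set g : ℕ → ℝ := fun i => Real.log ((b+i : ℕ):ℝ) with hg
    have hstep : ∀ i ∈ Finset.range m, (((b+1+i : ℕ):ℝ))^(-(1:ℝ)) ≤ g (i+1) - g i := by
      intro i _
      have hx : (2:ℝ) ≤ ((b+1+i : ℕ):ℝ) := by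
        push_cast
        have : (0:ℝ) ≤ (i:ℝ) := Nat.cast_nonneg i
        linarith
      have hs := step_eq hx
      have e1 : ((b+1+i : ℕ):ℝ) - 1 = ((b+i : ℕ):ℝ) := by push_cast; ring
      have e2 : ((b+(i+1) : ℕ):ℝ) = ((b+1+i : ℕ):ℝ) := by push_cast; ring
      rw [e1] at hs
      simp only [hg, e2]
      exact hs
    have htele : ∑ i ∈ Finset.range m, (((b+1+i : ℕ):ℝ))^(-(1:ℝ)) ≤ g m - g 0 := by
      calc ∑ i ∈ Finset.range m, (((b+1+i : ℕ):ℝ))^(-(1:ℝ))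
          ≤ ∑ i ∈ Finset.range m, (g (i+1) - g i) := Finset.sum_le_sum hstep
        _ = g m - g 0 := Finset.sum_range_sub g m
    have hg0 : g 0 = Real.log (b:ℝ) := by simp [hg]
    have hmono2 : g m ≤ Real.log C := by
      simp only [hg]
      apply Real.log_le_log (by positivity)
      push_cast; linarith
    have hrw : (C / (b:ℝ)) ^ γs = Real.exp (γs * (Real.log C - Real.log (b:ℝ))) := by
      rw [Real.rpow_def_of_pos (by positivity : (0:ℝ) < C / (b:ℝ)),
        Real.log_div (ne_of_gt hC0) (ne_of_gt hb0), mul_comm]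
    calc wtilde γs 1 ω n 1 ≤ Real.exp (γs * ∑ k ∈ S, ((k:ℝ)) ^ (-(1:ℝ))) := hA
      _ ≤ Real.exp (γs * (Real.log C - Real.log (b:ℝ))) := by
          rw [Real.exp_le_exp]
          apply mul_le_mul_of_nonneg_left _ hγs.le
          calc ∑ k ∈ S, ((k:ℝ)) ^ (-(1:ℝ))
              ≤ ∑ i ∈ Finset.range m, (((b+1+i : ℕ):ℝ))^(-(1:ℝ)) := hB
            _ ≤ g m - g 0 := htele
            _ ≤ Real.log C - Real.log (b:ℝ) := by rw [hg0]; linarith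
      _ = (C / (b:ℝ)) ^ γs := hrw.symm
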